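/- arXiv:1511.03977 — 4 statements merged into one kernel-verified Lean document; each statement's English description precedes it below -/
import Mathlib

section
/- Let T : X → Y be a bounded linear operator between Hilbert spaces, α > 0, m ≥ 1, and let g_α(x) = ((x+α)^m - α^m)/(x(x+α)^m). Then for every ψ ∈ Y, ‖g_α(T*T)T*ψ‖² ≤ (sup_{x≥0} |x g_α(x)|)·(sup_{x≥0} |g_α(x)|)·‖ψ‖², and hence ‖g_α(T*T)T*ψ‖ ≤ √(m/α)·‖ψ‖. -/
open ContinuousLinearMap

/-- Let `T : X → Y` be a bounded linear operator between Hilbert spaces, `α > 0`, `m ≥ 1`,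
and `g_α(x) = ((x+α)^m − α^m)/(x(x+α)^m)` (with `g_α(0) = m/α`). Then for every `ψ ∈ Y`,
`‖g_α(T*T)T*ψ‖² ≤ (sup_{x≥0}|x g_α(x)|)·(sup_{x≥0}|g_α(x)|)·‖ψ‖², and hence
`‖g_α(T*T)T*ψ‖ ≤ √(m/α)·‖ψ‖`. -/
theorem stmt_4 {X Y : Type*} [NormedAddCommGroup X] [InnerProductSpace ℂ X] [CompleteSpace X]
    [NormedAddCommGroup Y] [InnerProductSpace ℂ Y] [CompleteSpace Y]
    (T : X →L[ℂ] Y) (α : ℝ) (m : ℕ) (hα : 0 < α) (hm : 1 ≤ m)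
    (g : ℝ → ℝ)
    (hg : ∀ x : ℝ, g x = if x = 0 then (m : ℝ) / α else ((x + α) ^ m - α ^ m) / (x * (x + α) ^ m))
    (ψ : Y) :
    ‖(cfc g (ContinuousLinearMap.adjoint T ∘L T)) (ContinuousLinearMap.adjoint T ψ)‖ ^ 2 ≤
        (⨆ x : {x : ℝ // 0 ≤ x}, |(x : ℝ) * g x|) * (⨆ x : {x : ℝ // 0 ≤ x}, |g x|) * ‖ψ‖ ^ 2 ∧
      ‖(cfc g (ContinuousLinearMap.adjoint T ∘L T)) (ContinuousLinearMap.adjoint T ψ)‖ ≤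
        Real.sqrt ((m : ℝ) / α) * ‖ψ‖ := by
  have hα' : α ≠ 0 := ne_of_gt hα
  set S : ℝ → ℝ := fun x => ∑ i ∈ Finset.range m, (x + α) ^ i * α ^ (m - 1 - i) with hSdef
  set h : ℝ → ℝ := fun x => S x / (x + α) ^ m with hhdef
  -- key algebraic identity
  have hkey : ∀ x : ℝ, x * S x = (x + α) ^ m - α ^ m := by
    intro x
    have h1 := geom_sum₂_mul (x + α) α m
    rw [add_sub_cancel_right] at h1
    rw [mul_comm]
    exact h1
  -- g agrees with h on nonnegative reals
  have hgh : ∀ x : ℝ, 0 ≤ x → g x = h x := by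
    intro x hx
    rcases eq_or_lt_of_le hx with hx0 | hx0
    · subst hx0
      rw [hg, if_pos rfl, hhdef]
      have hS0 : S 0 = m * α ^ (m - 1) := by
        rw [hSdef]
        simp only [zero_add]
        rw [Finset.sum_congr rfl (fun i hi => ?_), Finset.sum_const, Finset.card_range,
          nsmul_eq_mul]
        rw [← pow_add, Nat.add_sub_cancel' (Nat.le_sub_one_of_lt (Finset.mem_range.mp hi))]
      simp only [zero_add]
      rw [hS0]
      have hpow : α ^ m = α ^ (m - 1) * α := by
        rw [← pow_succ, Nat.sub_add_cancel hm]
      rw [hpow, mul_comm (m : ℝ) _, mul_div_mul_left _ _ (pow_ne_zero _ hα')]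
    · rw [hg, if_neg (ne_of_gt hx0), ← hkey x, mul_div_mul_left _ _ (ne_of_gt hx0)]
  -- basic bounds for h on nonnegative reals
  have hxα : ∀ x : ℝ, 0 ≤ x → (0:ℝ) < x + α := fun x hx => by linarith
  have hS_nonneg : ∀ x : ℝ, 0 ≤ x → 0 ≤ S x := by
    intro x hx
    apply Finset.sum_nonneg
    intro i _
    have := hxα x hx
    positivity
  have hh_nonneg : ∀ x : ℝ, 0 ≤ x → 0 ≤ h x := by
    intro x hx
    exact div_nonneg (hS_nonneg x hx) (le_of_lt (pow_pos (hxα x hx) m))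
  have hS_le : ∀ x : ℝ, 0 ≤ x → S x ≤ m * (x + α) ^ (m - 1) := by
    intro x hx
    have hx1 := hxα x hx
    calc S x ≤ ∑ _i ∈ Finset.range m, (x + α) ^ (m - 1) := by
          apply Finset.sum_le_sum
          intro i hi
          calc (x + α) ^ i * α ^ (m - 1 - i)
              ≤ (x + α) ^ i * (x + α) ^ (m - 1 - i) := by
                apply mul_le_mul_of_nonneg_left _ (le_of_lt (pow_pos hx1 i))
                exact pow_le_pow_left₀ (le_of_lt hα) (by linarith) _
            _ = (x + α) ^ (m - 1) := by
                rw [← pow_add, Nat.add_sub_cancel' (Nat.le_sub_one_of_lt (Finset.mem_range.mp hi))]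
      _ = m * (x + α) ^ (m - 1) := by rw [Finset.sum_const, Finset.card_range, nsmul_eq_mul]
  have hh_le : ∀ x : ℝ, 0 ≤ x → h x ≤ (m : ℝ) / α := by
    intro x hx
    have hx1 := hxα x hx
    have hpow : (x + α) ^ m = (x + α) ^ (m - 1) * (x + α) := by
      rw [← pow_succ, Nat.sub_add_cancel hm]
    calc h x ≤ (m * (x + α) ^ (m - 1)) / (x + α) ^ m := by
          show S x / (x + α) ^ m ≤ _
          exact (div_le_div_iff_of_pos_right (pow_pos hx1 m)).mpr (hS_le x hx)
      _ = (m : ℝ) / (x + α) := by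
          rw [hpow, mul_comm ((m:ℝ)) _, mul_comm ((x + α) ^ (m-1)) (x + α)]
          rw [mul_comm ((x+α)) ((x + α) ^ (m-1))] at *
          rw [show (x + α) ^ (m - 1) * (m:ℝ) / ((x + α) ^ (m - 1) * (x + α)) = (m:ℝ)/(x+α) from
            mul_div_mul_left _ _ (ne_of_gt (pow_pos hx1 _))]
      _ ≤ (m : ℝ) / α := by
          apply div_le_div_of_nonneg_left (by positivity) hα (by linarith)
  have hxh_le : ∀ x : ℝ, 0 ≤ x → x * h x ≤ 1 := by
    intro x hx
    have hx1 := hxα x hx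
    have : x * h x = ((x + α) ^ m - α ^ m) / (x + α) ^ m := by
      rw [hhdef]
      simp only
      rw [mul_div_assoc', hkey x]
    rw [this, div_le_one (pow_pos hx1 m)]
    have : (0:ℝ) ≤ α ^ m := by positivity
    linarith
  -- suprema
  set S₁ : ℝ := ⨆ x : {x : ℝ // 0 ≤ x}, |(x : ℝ) * g x| with hS₁def
  set S₂ : ℝ := ⨆ x : {x : ℝ // 0 ≤ x}, |g x| with hS₂def
  have habs1 : ∀ x : {x : ℝ // 0 ≤ x}, |(x : ℝ) * g x| ≤ 1 := by
    rintro ⟨x, hx⟩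
    simp only
    rw [hgh x hx, abs_of_nonneg (mul_nonneg hx (hh_nonneg x hx))]
    exact hxh_le x hx
  have habs2 : ∀ x : {x : ℝ // 0 ≤ x}, |g x| ≤ (m : ℝ) / α := by
    rintro ⟨x, hx⟩
    simp only
    rw [hgh x hx, abs_of_nonneg (hh_nonneg x hx)]
    exact hh_le x hx
  have hbdd1 : BddAbove (Set.range fun x : {x : ℝ // 0 ≤ x} => |(x : ℝ) * g x|) :=
    ⟨1, by rintro _ ⟨x, rfl⟩; exact habs1 x⟩
  have hbdd2 : BddAbove (Set.range fun x : {x : ℝ // 0 ≤ x} => |g x|) :=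
    ⟨(m : ℝ) / α, by rintro _ ⟨x, rfl⟩; exact habs2 x⟩
  have hS₁le : S₁ ≤ 1 := ciSup_le habs1
  have hS₂le : S₂ ≤ (m : ℝ) / α := ciSup_le habs2
  have hS₁nonneg : (0:ℝ) ≤ S₁ :=
    le_trans (abs_nonneg _) (le_ciSup hbdd1 ⟨0, le_refl 0⟩)
  have hS₂nonneg : (0:ℝ) ≤ S₂ :=
    le_trans (abs_nonneg _) (le_ciSup hbdd2 ⟨0, le_refl 0⟩)
  -- the operator
  set A : X →L[ℂ] X := ContinuousLinearMap.adjoint T ∘L T with hAdef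
  have hApos : A.IsPositive := by
    exact ContinuousLinearMap.isPositive_adjoint_comp_self T
  have hA : IsSelfAdjoint A := hApos.isSelfAdjoint
  have hspec : ∀ x ∈ spectrum ℝ A, (0:ℝ) ≤ x := fun x hx =>
    spectrum_nonneg_of_nonneg ((ContinuousLinearMap.nonneg_iff_isPositive A).mpr hApos) hx
  have hcontS : Continuous S := by fun_prop
  have hcont : ContinuousOn h (spectrum ℝ A) := by
    apply ContinuousOn.div hcontS.continuousOn (by fun_prop)
    intro x hx
    exact pow_ne_zero _ (ne_of_gt (hxα x (hspec x hx)))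
  have hcfc : cfc g A = cfc h A := cfc_congr (fun x hx => hgh x (hspec x hx))
  set C : X →L[ℂ] X := cfc h A with hCdef
  have hCsa : IsSelfAdjoint C := IsSelfAdjoint.cfc
  set v : X := ContinuousLinearMap.adjoint T ψ with hvdef
  set B : Y →L[ℂ] Y := (T ∘L C) ∘L (ContinuousLinearMap.adjoint (T ∘L C)) with hBdef
  -- ‖C v‖ ^ 2 = re ⟪ψ, B ψ⟫
  have hBψ : B ψ = T (C (C v)) := by
    simp [hBdef, adjoint_comp, hCsa.adjoint_eq, hvdef]
  have hinner : ‖C v‖ ^ 2 = RCLike.re (inner ℂ ψ (B ψ)) := by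
    have e : inner ℂ (C v) (C v) = inner ℂ ψ (B ψ) := by
      rw [hBψ]
      calc inner ℂ (C v) (C v) = inner ℂ v (C (C v)) := hCsa.isSymmetric v (C v)
        _ = inner ℂ ψ (T (C (C v))) := by rw [hvdef]; exact adjoint_inner_left T (C (C v)) ψ
    rw [← inner_self_eq_norm_sq (𝕜 := ℂ) (C v), e]
  have h1 : ‖C v‖ ^ 2 ≤ ‖B‖ * ‖ψ‖ ^ 2 := by
    rw [hinner]
    calc RCLike.re (inner ℂ ψ (B ψ)) ≤ ‖inner ℂ ψ (B ψ)‖ := RCLike.re_le_norm _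
      _ ≤ ‖ψ‖ * ‖B ψ‖ := norm_inner_le_norm _ _
      _ ≤ ‖ψ‖ * (‖B‖ * ‖ψ‖) :=
          mul_le_mul_of_nonneg_left (le_opNorm B ψ) (norm_nonneg ψ)
      _ = ‖B‖ * ‖ψ‖ ^ 2 := by ring
  -- norm of B
  have hDD : ContinuousLinearMap.adjoint (T ∘L C) ∘L (T ∘L C) = C * (A * C) := by
    ext x
    simp only [adjoint_comp, hCsa.adjoint_eq, coe_comp', Function.comp_apply, mul_apply, hAdef]
    rfl
  have hcfc2 : cfc (fun x : ℝ => h x * (x * h x)) A = C * (A * C) := by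
    rw [cfc_mul h (fun x => x * h x) A hcont (continuousOn_id.mul hcont)]
    rw [cfc_mul (fun x : ℝ => x) h A continuousOn_id hcont, cfc_id' ℝ A]
  have hBnorm : ‖B‖ ≤ S₁ * S₂ := by
    have e1 : ‖B‖ = ‖ContinuousLinearMap.adjoint (T ∘L C)‖ * ‖ContinuousLinearMap.adjoint (T ∘L C)‖ := by
      rw [hBdef, ← norm_adjoint_comp_self (ContinuousLinearMap.adjoint (T ∘L C)),
        adjoint_adjoint]
    have e2 : ‖ContinuousLinearMap.adjoint (T ∘L C)‖ = ‖T ∘L C‖ :=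
      LinearIsometryEquiv.norm_map _ _
    rw [e1, e2, ← norm_adjoint_comp_self (T ∘L C), hDD, ← hcfc2]
    apply norm_cfc_le (mul_nonneg hS₁nonneg hS₂nonneg)
    intro x hx
    have hx0 := hspec x hx
    have : ‖h x * (x * h x)‖ = |(x : ℝ) * g x| * |g x| := by
      rw [Real.norm_eq_abs, abs_mul, hgh x hx0, mul_comm]
    rw [this]
    exact mul_le_mul (le_ciSup hbdd1 ⟨x, hx0⟩) (le_ciSup hbdd2 ⟨x, hx0⟩)
      (abs_nonneg _) hS₁nonneg
  have hmain : ‖C v‖ ^ 2 ≤ S₁ * S₂ * ‖ψ‖ ^ 2 :=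
    le_trans h1 (mul_le_mul_of_nonneg_right hBnorm (sq_nonneg _))
  constructor
  · rw [hcfc]
    exact hmain
  · rw [hcfc]
    have h2 : ‖C v‖ ^ 2 ≤ (m : ℝ) / α * ‖ψ‖ ^ 2 := by
      refine le_trans hmain (mul_le_mul_of_nonneg_right ?_ (sq_nonneg _))
      calc S₁ * S₂ ≤ 1 * ((m : ℝ) / α) := mul_le_mul hS₁le hS₂le hS₂nonneg zero_le_one
        _ = (m : ℝ) / α := one_mul _
    have := Real.sqrt_le_sqrt h2
    rwa [Real.sqrt_sq (norm_nonneg _), Real.sqrt_mul (by positivity) (‖ψ‖ ^ 2),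
      Real.sqrt_sq (norm_nonneg _)] at this
end

section
/- (McDiarmid's inequality) Let W₁,…,W_n be independent random variables and f a function of (W₁,…,W_n) such that changing the i-th coordinate changes f by at most c_i. Then for every t ≥ 0, P(|f(W₁,…,W_n) − E f(W₁,…,W_n)| ≥ t) ≤ 2 exp(−2t² / Σᵢ c_i²). -/
open MeasureTheory ProbabilityTheory
open Real
open scoped ENNReal

set_option maxHeartbeats 1000000 in

lemma mcd_D_pos {p : ℝ} (hp0 : 0 ≤ p) (hp1 : p ≤ 1) (h : ℝ) :
    0 < 1 - p + p * exp h := by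
  rcases eq_or_lt_of_le hp1 with rfl | hp1
  · simpa using exp_pos h
  · have : 0 ≤ p * exp h := mul_nonneg hp0 (exp_pos h).le
    linarith

lemma mcd_key_ineq {p : ℝ} (hp0 : 0 ≤ p) (hp1 : p ≤ 1) (h : ℝ) :
    Real.log (1 - p + p * Real.exp h) - p * h ≤ h ^ 2 / 8 := by
  set D : ℝ → ℝ := fun x => 1 - p + p * exp x with hD
  have hDpos : ∀ x, 0 < D x := fun x => mcd_D_pos hp0 hp1 x
  set φ : ℝ → ℝ := fun x => log (D x) - p * x - x ^ 2 / 8 with hφ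
  set φ' : ℝ → ℝ := fun x => p * exp x / D x - p - x / 4 with hφ'
  have hDd : ∀ x, HasDerivAt D (p * exp x) x := fun x => by
    exact ((Real.hasDerivAt_exp x).const_mul p).const_add (1 - p)
  have hφd : ∀ x, HasDerivAt φ (φ' x) x := by
    intro x
    have h1 : HasDerivAt (fun y => log (D y)) (p * exp x / D x) x :=
      (hDd x).log (hDpos x).ne'
    have h2 : HasDerivAt (fun y : ℝ => p * y) p x := by simpa using (hasDerivAt_id x).const_mul p
    have h3 : HasDerivAt (fun y : ℝ => y ^ 2 / 8) (x / 4) x := by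
      have := (hasDerivAt_pow 2 x).div_const 8
      rw [show x / 4 = ↑2 * x ^ (2 - 1) / 8 by norm_num; ring]; exact this
    exact (h1.sub h2).sub h3
  have hφ'd : ∀ x, HasDerivAt φ'
      ((p * exp x * D x - p * exp x * (p * exp x)) / (D x) ^ 2 - 1 / 4) x := by
    intro x
    have h1 : HasDerivAt (fun y => p * exp y / D y)
        ((p * exp x * D x - p * exp x * (p * exp x)) / (D x) ^ 2) x :=
      (((Real.hasDerivAt_exp x).const_mul p)).div (hDd x) (hDpos x).ne'
    have h2 : HasDerivAt (fun _ : ℝ => p) 0 x := hasDerivAt_const x p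
    have h3 : HasDerivAt (fun y : ℝ => y / 4) (1 / 4) x := by
      simpa using (hasDerivAt_id x).div_const 4
    have := (h1.sub h2).sub h3; rw [sub_zero] at this; exact this
  have hφ''_nonpos : ∀ x, (p * exp x * D x - p * exp x * (p * exp x)) / (D x) ^ 2 - 1 / 4 ≤ 0 := by
    intro x
    have hD2 : (0:ℝ) < (D x) ^ 2 := pow_pos (hDpos x) 2
    rw [sub_nonpos, div_le_iff₀ hD2]
    have hnum : p * exp x * D x - p * exp x * (p * exp x) = (p * exp x) * (1 - p) := by
      simp only [hD]; ring
    rw [hnum]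
    nlinarith [sq_nonneg (p * exp x - (1 - p)), sq_nonneg (D x),
      (hDpos x).le, mul_nonneg hp0 (exp_pos x).le]
  have hφ'anti : Antitone φ' := by
    apply antitone_of_deriv_nonpos
    · exact fun x => (hφ'd x).differentiableAt
    · intro x; rw [(hφ'd x).deriv]; exact hφ''_nonpos x
  have hφ'0 : φ' 0 = 0 := by simp [hφ', hD]
  have hφ0 : φ 0 = 0 := by simp [hφ, hD]
  have hcont : Continuous φ := by
    apply Continuous.sub
    apply Continuous.sub
    · exact (continuous_const.add (continuous_const.mul continuous_exp)).log
        (fun x => (hDpos x).ne')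
    · exact continuous_const.mul continuous_id
    · exact (continuous_pow 2).div_const 8
  have key : φ h ≤ 0 := by
    rcases le_total h 0 with hh | hh
    · have mono : MonotoneOn φ (Set.Iic (0:ℝ)) := by
        apply monotoneOn_of_deriv_nonneg (convex_Iic 0) hcont.continuousOn
          (fun x _ => (hφd x).differentiableAt.differentiableWithinAt)
        intro x hx
        rw [(hφd x).deriv]
        have : φ' 0 ≤ φ' x := hφ'anti (le_of_lt (by simpa using hx))
        linarith [hφ'0 ▸ this]
      have := mono (Set.mem_Iic.2 hh) (Set.mem_Iic.2 le_rfl) hh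
      linarith [hφ0 ▸ this]
    · have anti : AntitoneOn φ (Set.Ici (0:ℝ)) := by
        apply antitoneOn_of_deriv_nonpos (convex_Ici 0) hcont.continuousOn
          (fun x _ => (hφd x).differentiableAt.differentiableWithinAt)
        intro x hx
        rw [(hφd x).deriv]
        have : φ' x ≤ φ' 0 := hφ'anti (le_of_lt (by simpa using hx))
        linarith [hφ'0 ▸ this]
      have := anti (Set.mem_Ici.2 le_rfl) (Set.mem_Ici.2 hh) hh
      linarith [hφ0 ▸ this]
  have : log (D h) - p * h - h ^ 2 / 8 ≤ 0 := key
  linarith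

section Hoeffding
variable {Ω : Type*} [MeasurableSpace Ω] (μ : Measure Ω) [IsProbabilityMeasure μ]

lemma mcd_integrable_of_bounded {g : Ω → ℝ} (hg : Measurable g) {C : ℝ}
    (hC : ∀ ω, |g ω| ≤ C) : Integrable g μ :=
  Integrable.mono' (integrable_const C) hg.aestronglyMeasurable
    (Filter.Eventually.of_forall hC)

/-- Hoeffding's lemma, oscillation form. -/
lemma mcd_hoeffding {X : Ω → ℝ} (hX : Measurable X) {c : ℝ}
    (hosc : ∀ ω ω', X ω - X ω' ≤ c) (l : ℝ) :
    ∫ ω, exp (l * (X ω - ∫ ω', X ω' ∂μ)) ∂μ ≤ exp (l ^ 2 * c ^ 2 / 8) := by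
  have hΩ : Nonempty Ω := by
    by_contra hne
    rw [not_nonempty_iff] at hne
    have : μ Set.univ = 0 := by simp [Set.univ_eq_empty_iff.2 hne]
    simp [measure_univ] at this
  obtain ⟨ω₀⟩ := hΩ
  have hc0 : 0 ≤ c := le_trans (by simp) (hosc ω₀ ω₀)
  -- bounds
  have hbddX : ∀ ω, |X ω| ≤ |X ω₀| + c := by
    intro ω
    have h1 := hosc ω ω₀
    have h2 := hosc ω₀ ω
    rw [abs_le]
    constructor
    · linarith [neg_abs_le (X ω₀)]
    · linarith [le_abs_self (X ω₀)]
  have hintX : Integrable X μ := mcd_integrable_of_bounded μ hX hbddX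
  set a : ℝ := sInf (Set.range X) with ha
  set b : ℝ := sSup (Set.range X) with hb
  have hbdd_below : BddBelow (Set.range X) := ⟨-(|X ω₀| + c), by
    rintro _ ⟨ω, rfl⟩; linarith [(abs_le.1 (hbddX ω)).1]⟩
  have hbdd_above : BddAbove (Set.range X) := ⟨|X ω₀| + c, by
    rintro _ ⟨ω, rfl⟩; linarith [(abs_le.1 (hbddX ω)).2]⟩
  have haX : ∀ ω, a ≤ X ω := fun ω => csInf_le hbdd_below ⟨ω, rfl⟩
  have hXb : ∀ ω, X ω ≤ b := fun ω => le_csSup hbdd_above ⟨ω, rfl⟩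
  have hab : a ≤ b := le_trans (haX ω₀) (hXb ω₀)
  have hba : b - a ≤ c := by
    have : ∀ ω, X ω ≤ a + c := by
      intro ω
      have : X ω - c ≤ a := le_csInf ⟨X ω₀, ⟨ω₀, rfl⟩⟩ (by rintro _ ⟨ω', rfl⟩; linarith [hosc ω ω'])
      linarith
    have : b ≤ a + c := csSup_le ⟨X ω₀, ⟨ω₀, rfl⟩⟩ (by rintro _ ⟨ω', rfl⟩; exact this ω')
    linarith
  set m : ℝ := ∫ ω', X ω' ∂μ with hm
  have ham : a ≤ m := by
    rw [hm]
    calc a = ∫ _, a ∂μ := by simp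
    _ ≤ _ := integral_mono (integrable_const a) hintX haX
  have hmb : m ≤ b := by
    rw [hm]
    calc (∫ ω', X ω' ∂μ) ≤ ∫ _, b ∂μ := integral_mono hintX (integrable_const b) hXb
    _ = b := by simp
  rcases eq_or_lt_of_le hab with heq | hlt
  · -- constant case
    have hXconst : ∀ ω, X ω = m := by
      intro ω
      have := haX ω; have := hXb ω
      have : X ω = a := le_antisymm (heq ▸ hXb ω) (haX ω)
      have hma : m = a := le_antisymm (heq ▸ hmb) ham
      rw [this, hma]
    have : ∀ ω, exp (l * (X ω - m)) = 1 := by intro ω; rw [hXconst ω]; simp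
    rw [integral_congr_ae (Filter.Eventually.of_forall this)]
    simp only [integral_const, probReal_univ, smul_eq_mul, mul_one, one_smul]
    exact one_le_exp (by positivity)
  · -- main case: a < b
    set a' : ℝ := a - m with ha'
    set b' : ℝ := b - m with hb'
    have ha'0 : a' ≤ 0 := by simp only [ha']; linarith
    have hb'0 : 0 ≤ b' := by simp only [hb']; linarith
    have hlt' : a' < b' := by simp only [ha', hb']; linarith
    have hlen : b' - a' = b - a := by simp only [ha', hb']; ring
    set p : ℝ := -a' / (b' - a') with hp
    have hden : (0:ℝ) < b' - a' := by linarith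
    have hp0 : 0 ≤ p := by
      apply div_nonneg (by linarith) hden.le
    have hp1 : p ≤ 1 := by
      rw [hp, div_le_one hden]; linarith
    set h : ℝ := l * (b' - a') with hh
    -- convexity bound pointwise
    have hconv : ∀ ω, exp (l * (X ω - m)) ≤
        (b' - (X ω - m)) / (b' - a') * exp (l * a') + ((X ω - m) - a') / (b' - a') * exp (l * b') := by
      intro ω
      set x := X ω - m with hx
      have hxa : a' ≤ x := by simp only [ha', hx]; linarith [haX ω]
      have hxb : x ≤ b' := by simp only [hb', hx]; linarith [hXb ω]
      have hs : (0:ℝ) ≤ (b' - x) / (b' - a') := div_nonneg (by linarith) hden.le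
      have ht : (0:ℝ) ≤ (x - a') / (b' - a') := div_nonneg (by linarith) hden.le
      have hst : (b' - x) / (b' - a') + (x - a') / (b' - a') = 1 := by
        field_simp
        ring
      have := convexOn_exp.2 (Set.mem_univ (l * a')) (Set.mem_univ (l * b')) hs ht hst
      simp only [smul_eq_mul] at this
      have harg : (b' - x) / (b' - a') * (l * a') + (x - a') / (b' - a') * (l * b') = l * x := by
        field_simp; ring
      rwa [harg] at this
    -- integrate
    have hintE : Integrable (fun ω => exp (l * (X ω - m))) μ := by
      apply mcd_integrable_of_bounded μ (by measurability)
      intro ω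
      rw [abs_of_nonneg (exp_pos _).le]
      apply exp_le_exp.2
      have h1 := haX ω; have h2 := hXb ω
      calc l * (X ω - m) ≤ |l| * |X ω - m| := by
            rw [← abs_mul]; exact le_abs_self _
      _ ≤ |l| * (b - a) := by
            apply mul_le_mul_of_nonneg_left _ (abs_nonneg l)
            rw [abs_le]; constructor <;> linarith
    have hintA : Integrable (fun ω => (b' - (X ω - m)) / (b' - a')) μ := by
      have e1 : (fun ω => (b' - (X ω - m)) / (b' - a')) =
          (fun ω => ((b' + m) - X ω) / (b' - a')) := by funext ω; ring
      rw [e1]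
      exact (((integrable_const (b' + m)).sub hintX).div_const _)
    have hintB : Integrable (fun ω => ((X ω - m) - a') / (b' - a')) μ := by
      have e2 : (fun ω => ((X ω - m) - a') / (b' - a')) =
          (fun ω => (X ω - (m + a')) / (b' - a')) := by funext ω; ring
      rw [e2]
      exact ((hintX.sub (integrable_const (m + a'))).div_const _)
    have hintRHS : Integrable (fun ω => (b' - (X ω - m)) / (b' - a') * exp (l * a')
        + ((X ω - m) - a') / (b' - a') * exp (l * b')) μ :=
      (hintA.mul_const _).add (hintB.mul_const _)
    have hIA : (∫ ω, (b' - (X ω - m)) / (b' - a') ∂μ) = b' / (b' - a') := by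
      have e1 : (fun ω => (b' - (X ω - m)) / (b' - a')) =
          (fun ω => ((b' + m) - X ω) / (b' - a')) := by funext ω; ring
      rw [e1, integral_div, integral_sub (integrable_const (b' + m)) hintX]
      simp only [integral_const, probReal_univ, one_smul, smul_eq_mul]
      rw [← hm]; ring_nf
    have hIB : (∫ ω, ((X ω - m) - a') / (b' - a') ∂μ) = (-a') / (b' - a') := by
      have e2 : (fun ω => ((X ω - m) - a') / (b' - a')) =
          (fun ω => (X ω - (m + a')) / (b' - a')) := by funext ω; ring
      rw [e2, integral_div, integral_sub hintX (integrable_const (m + a'))]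
      simp only [integral_const, probReal_univ, one_smul, smul_eq_mul]
      rw [← hm]; ring_nf
    have hIa : (∫ ω, ((b' - (X ω - m)) / (b' - a') * exp (l * a')
        + ((X ω - m) - a') / (b' - a') * exp (l * b'))  ∂μ)
        = b' / (b' - a') * exp (l * a') + (- a') / (b' - a') * exp (l * b') := by
      rw [integral_add (hintA.mul_const _) (hintB.mul_const _),
        integral_mul_const, integral_mul_const, hIA, hIB]
    have step1 : (∫ ω, exp (l * (X ω - m)) ∂μ)
        ≤ b' / (b' - a') * exp (l * a') + (- a') / (b' - a') * exp (l * b') := by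
      rw [← hIa]
      exact integral_mono hintE hintRHS hconv
    -- identify RHS with exp(log(1-p+p e^h) - p h)
    have hident : b' / (b' - a') * exp (l * a') + (- a') / (b' - a') * exp (l * b')
        = exp (Real.log (1 - p + p * exp h) - p * h) := by
      have h1p : 1 - p = b' / (b' - a') := by
        rw [hp]; field_simp
        ring
      have hla' : l * a' = -(p * h) := by
        rw [hp, hh]; field_simp
      have hlb' : l * b' = h - p * h := by
        rw [hp, hh]; field_simp; ring
      have hDpos : 0 < 1 - p + p * exp h := by
        rcases eq_or_lt_of_le hp1 with heq1 | hp1'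
        · rw [heq1]; simpa using exp_pos h
        · have : 0 ≤ p * exp h := mul_nonneg hp0 (exp_pos h).le
          linarith
      have hexp : exp (Real.log (1 - p + p * exp h) - p * h)
          = (1 - p + p * exp h) * exp (-(p * h)) := by
        rw [sub_eq_add_neg, Real.exp_add, Real.exp_log hDpos]
      rw [hexp, ← h1p, ← hp, hla', hlb',
        show h - p * h = h + -(p * h) from by ring, Real.exp_add]
      ring
    have step2 : exp (Real.log (1 - p + p * exp h) - p * h) ≤ exp (h ^ 2 / 8) :=
      exp_le_exp.2 (mcd_key_ineq hp0 hp1 h)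
    have step3 : h ^ 2 / 8 ≤ l ^ 2 * c ^ 2 / 8 := by
      have hd : b' - a' ≤ c := by rw [hlen]; exact hba
      have h2 : h ^ 2 ≤ l ^ 2 * c ^ 2 := by
        rw [hh]
        nlinarith [sq_nonneg l, mul_le_mul hd hd hden.le hc0, sq_nonneg (l * (b' - a'))]
      linarith
    calc (∫ ω, exp (l * (X ω - m)) ∂μ)
        ≤ exp (Real.log (1 - p + p * exp h) - p * h) := by rw [← hident]; exact step1
    _ ≤ exp (h ^ 2 / 8) := step2
    _ ≤ exp (l ^ 2 * c ^ 2 / 8) := exp_le_exp.2 step3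

end Hoeffding

lemma mcd_integrable_of_bounded' {Ω : Type*} [MeasurableSpace Ω] {μ : Measure Ω}
    [IsFiniteMeasure μ] {g : Ω → ℝ} (hg : Measurable g) {C : ℝ}
    (hC : ∀ ω, |g ω| ≤ C) : Integrable g μ :=
  Integrable.mono' (integrable_const C) hg.aestronglyMeasurable
    (Filter.Eventually.of_forall hC)

lemma mcd_abs_integral {α : Type*} [MeasurableSpace α] {μ : Measure α} (f : α → ℝ) :
    |∫ a, f a ∂μ| ≤ ∫ a, |f a| ∂μ := by
  simpa [Real.norm_eq_abs] using norm_integral_le_integral_norm (μ := μ) f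

lemma mcd_nonempty {α : Type*} [MeasurableSpace α] (μ : Measure α)
    [IsProbabilityMeasure μ] : Nonempty α := by
  by_contra hne
  rw [not_nonempty_iff] at hne
  have h0 : μ Set.univ = 0 := by simp [Set.univ_eq_empty_iff.2 hne]
  simp [measure_univ] at h0

/-- telescoping bound -/
lemma mcd_osc {n : ℕ} {𝒳 : Fin n → Type*} (f : (∀ i, 𝒳 i) → ℝ) (c : Fin n → ℝ)
    (hbdd : ∀ (i : Fin n) (w : ∀ j, 𝒳 j) (w' : 𝒳 i),
      |f w - f (Function.update w i w')| ≤ c i) :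
    ∀ x y, f x - f y ≤ ∑ i, c i := by
  suffices H : ∀ s : Finset (Fin n), ∀ x y : ∀ i, 𝒳 i, (∀ i ∉ s, x i = y i) →
      f x - f y ≤ ∑ i ∈ s, c i by
    exact fun x y => H Finset.univ x y (fun i hi => absurd (Finset.mem_univ i) hi)
  intro s
  induction s using Finset.induction_on with
  | empty =>
    intro x y hxy
    have hxy' : x = y := funext fun i => hxy i (by simp)
    simp [hxy']
  | @insert a s ha ih =>
    intro x y hxy
    classical
    have h1 : f x - f (Function.update x a (y a)) ≤ c a :=
      le_trans (le_abs_self _) (hbdd a x (y a))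
    have h2 : f (Function.update x a (y a)) - f y ≤ ∑ i ∈ s, c i := by
      apply ih
      intro i hi
      rcases eq_or_ne i a with rfl | hia
      · simp
      · rw [Function.update_of_ne hia]
        exact hxy i (by simp [hia, hi])
    calc f x - f y = (f x - f (Function.update x a (y a)))
          + (f (Function.update x a (y a)) - f y) := by ring
    _ ≤ c a + ∑ i ∈ s, c i := add_le_add h1 h2
    _ = ∑ i ∈ insert a s, c i := (Finset.sum_insert ha).symm

lemma mcd_insertNth_update {n : ℕ} {α : Fin (n + 1) → Type*} (p : Fin (n + 1)) (x : α p)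
    (f : ∀ i, α (p.succAbove i)) (j : Fin n) (b : α (p.succAbove j)) :
    p.insertNth x (Function.update f j b) =
      Function.update (p.insertNth x f) (p.succAbove j) b := by
  classical
  ext i
  cases i using p.succAboveCases with
  | x =>
    rw [Fin.insertNth_apply_same, Function.update_of_ne (Fin.succAbove_ne p j).symm,
      Fin.insertNth_apply_same]
  | p k =>
    rw [Fin.insertNth_apply_succAbove]
    rcases eq_or_ne k j with rfl | hkj
    · rw [Function.update_self, Function.update_self]
    · rw [Function.update_of_ne hkj, Function.update_of_ne
        (fun h => hkj (Fin.succAbove_right_injective h)), Fin.insertNth_apply_succAbove]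

universe u

/-- Tensorization: sub-Gaussian mgf bound for bounded-differences functions on a product. -/
lemma mcd_mgf_pi : ∀ (n : ℕ) {𝒳 : Fin n → Type u} [∀ i, MeasurableSpace (𝒳 i)]
    (μ : ∀ i, Measure (𝒳 i)) [∀ i, IsProbabilityMeasure (μ i)]
    (f : (∀ i, 𝒳 i) → ℝ) (hf : Measurable f) (c : Fin n → ℝ)
    (hbdd : ∀ (i : Fin n) (w : ∀ j, 𝒳 j) (w' : 𝒳 i),
      |f w - f (Function.update w i w')| ≤ c i) (l : ℝ),
    ∫ x, exp (l * (f x - ∫ x', f x' ∂(Measure.pi μ))) ∂(Measure.pi μ)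
      ≤ exp (l ^ 2 * (∑ i, c i ^ 2) / 8) := by
  intro n
  induction n with
  | zero =>
    intro 𝒳 _ μ _ f hf c hbdd l
    have hconst : ∀ x : ∀ i, 𝒳 i, f x = f (fun i => i.elim0) :=
      fun x => congrArg f (funext fun i => i.elim0)
    have hint : (∫ x', f x' ∂(Measure.pi μ)) = f (fun i => i.elim0) := by
      rw [integral_congr_ae (Filter.Eventually.of_forall hconst)]
      simp
    calc (∫ x, exp (l * (f x - ∫ x', f x' ∂(Measure.pi μ))) ∂(Measure.pi μ))
        = ∫ _x, (1:ℝ) ∂(Measure.pi μ) := by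
          apply integral_congr_ae
          apply Filter.Eventually.of_forall
          intro x
          show exp (l * (f x - ∫ x', f x' ∂(Measure.pi μ))) = 1
          rw [hint, hconst x]
          simp
    _ = 1 := by simp
    _ ≤ exp (l ^ 2 * (∑ i, c i ^ 2) / 8) := by
          simp only [Finset.univ_eq_empty, Finset.sum_empty, mul_zero, zero_div, exp_zero, le_refl]
  | succ n ih =>
    intro 𝒳 _ μ _ f hf c hbdd l
    classical
    set Pm : Measure (∀ i, 𝒳 i) := Measure.pi μ with hPm
    set ν : Measure (∀ j : Fin n, 𝒳 ((0 : Fin (n+1)).succAbove j)) :=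
      Measure.pi (fun j => μ ((0 : Fin (n+1)).succAbove j)) with hν
    have mp := measurePreserving_piFinSuccAbove μ 0
    set e := MeasurableEquiv.piFinSuccAbove 𝒳 0 with he
    set F : 𝒳 0 × (∀ j : Fin n, 𝒳 ((0 : Fin (n+1)).succAbove j)) → ℝ :=
      fun q => f (Fin.insertNth 0 q.1 q.2) with hF
    have hesymm : ∀ q, e.symm q = Fin.insertNth 0 q.1 q.2 := by
      intro q
      rfl
    have hFe : ∀ x, F (e x) = f x := by
      intro x
      rw [hF]
      show f (Fin.insertNth 0 (e x).1 (e x).2) = f x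
      rw [← hesymm (e x), e.symm_apply_apply]
    have hFmeas : Measurable F := by
      have : F = f ∘ e.symm := by
        funext q; rw [Function.comp_apply, hesymm]
      rw [this]
      exact hf.comp e.symm.measurable
    set g : (∀ j : Fin n, 𝒳 ((0 : Fin (n+1)).succAbove j)) → ℝ :=
      fun y => ∫ a, F (a, y) ∂(μ 0) with hg
    have hgmeas : Measurable g :=
      hFmeas.stronglyMeasurable.integral_prod_left'.measurable
    -- boundedness of f
    haveI hne : ∀ i, Nonempty (𝒳 i) := fun i => mcd_nonempty (μ i)
    obtain ⟨x₀⟩ : Nonempty (∀ i, 𝒳 i) := ⟨fun i => Classical.arbitrary _⟩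
    set B : ℝ := ∑ i, c i with hB
    have hosc := mcd_osc f c hbdd
    set D : ℝ := |f x₀| + B with hD
    have hfB : ∀ x, |f x| ≤ D := by
      intro x
      have h1 := hosc x x₀
      have h2 := hosc x₀ x
      rw [abs_le]; constructor
      · rw [hD]; linarith [neg_abs_le (f x₀)]
      · rw [hD]; linarith [le_abs_self (f x₀)]
    have hfint : Integrable f Pm := mcd_integrable_of_bounded' hf hfB
    set M : ℝ := ∫ x', f x' ∂Pm with hM
    have hMD : |M| ≤ D := by
      rw [hM]
      calc |∫ x', f x' ∂Pm| ≤ ∫ x', |f x'| ∂Pm := mcd_abs_integral _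
      _ ≤ ∫ _x', D ∂Pm := integral_mono hfint.abs (integrable_const D) hfB
      _ = D := by simp
    -- bounded differences for F in first coordinate and for g
    have hFosc0 : ∀ y a a', F (a, y) - F (a', y) ≤ c 0 := by
      intro y a a'
      have : F (a', y) = f (Function.update (Fin.insertNth 0 a y) 0 a') := by
        rw [hF]
        show f (Fin.insertNth 0 a' y) = _
        rw [Fin.update_insertNth]
      rw [this]
      exact le_trans (le_abs_self _) (hbdd 0 (Fin.insertNth 0 a y) a')
    have hFupdate : ∀ (a : 𝒳 0) y (j : Fin n) (b : 𝒳 ((0 : Fin (n+1)).succAbove j)),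
        F (a, Function.update y j b) =
          f (Function.update (Fin.insertNth 0 a y) ((0 : Fin (n+1)).succAbove j) b) := by
      intro a y j b
      rw [hF]
      show f (Fin.insertNth 0 a (Function.update y j b)) = _
      rw [mcd_insertNth_update]
    have hFint_left : ∀ y, Integrable (fun a => F (a, y)) (μ 0) := by
      intro y
      apply mcd_integrable_of_bounded' (hFmeas.comp (measurable_id.prodMk measurable_const))
      intro a
      exact hfB _
    have hg_bdd : ∀ (j : Fin n) (y : ∀ k, 𝒳 ((0 : Fin (n+1)).succAbove k))
        (b : 𝒳 ((0 : Fin (n+1)).succAbove j)),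
        |g y - g (Function.update y j b)| ≤ c ((0 : Fin (n+1)).succAbove j) := by
      intro j y b
      have hgdiff : g y - g (Function.update y j b)
          = ∫ a, (F (a, y) - F (a, Function.update y j b)) ∂(μ 0) := by
        rw [hg]
        exact (integral_sub (hFint_left y) (hFint_left _)).symm
      rw [hgdiff]
      calc |∫ a, (F (a, y) - F (a, Function.update y j b)) ∂(μ 0)|
          ≤ ∫ a, |F (a, y) - F (a, Function.update y j b)| ∂(μ 0) :=
            mcd_abs_integral _
      _ ≤ ∫ _a, c ((0 : Fin (n+1)).succAbove j) ∂(μ 0) := by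
            apply integral_mono ((hFint_left y).sub (hFint_left _)).abs (integrable_const _)
            intro a
            show |F (a, y) - F (a, Function.update y j b)| ≤ c ((0 : Fin (n+1)).succAbove j)
            rw [hFupdate]
            exact hbdd _ _ _
      _ = c ((0 : Fin (n+1)).succAbove j) := by simp
    -- mean transfer
    have hFintprod : Integrable F ((μ 0).prod ν) :=
      mcd_integrable_of_bounded' hFmeas (fun q => hfB _)
    have hEfg : M = ∫ y, g y ∂ν := by
      rw [hM]
      have h1 : (∫ x', f x' ∂Pm) = ∫ q, F q ∂((μ 0).prod ν) := by
        rw [← mp.integral_comp' F]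
        exact integral_congr_ae (Filter.Eventually.of_forall fun x => by simp only [hFe])
      rw [h1, integral_prod_symm F hFintprod]
    -- main computation
    have hexpFbd : ∀ q, |exp (l * (F q - M))| ≤ exp (|l| * (2 * D)) := by
      intro q
      rw [abs_of_nonneg (exp_pos _).le]
      apply exp_le_exp.2
      calc l * (F q - M) ≤ |l| * |F q - M| := by rw [← abs_mul]; exact le_abs_self _
      _ ≤ |l| * (2 * D) := by
          apply mul_le_mul_of_nonneg_left _ (abs_nonneg l)
          calc |F q - M| ≤ |F q| + |M| := abs_sub _ _
          _ ≤ D + D := add_le_add (hfB _) hMD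
          _ = 2 * D := by ring
    have hexpFint : Integrable (fun q => exp (l * (F q - M))) ((μ 0).prod ν) :=
      mcd_integrable_of_bounded' (((hFmeas.sub measurable_const).const_mul l).exp) hexpFbd
    have hexpF_left : ∀ y, Integrable (fun a => exp (l * (F (a, y) - M))) (μ 0) := by
      intro y
      have hXmeas : Measurable (fun a => F (a, y)) :=
        hFmeas.comp (measurable_id.prodMk measurable_const)
      exact mcd_integrable_of_bounded' (((hXmeas.sub measurable_const).const_mul l).exp)
        (fun a => hexpFbd (a, y))
    have step1 : (∫ x, exp (l * (f x - M)) ∂Pm)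
        = ∫ q, exp (l * (F q - M)) ∂((μ 0).prod ν) := by
      rw [← mp.integral_comp' (fun q => exp (l * (F q - M)))]
      exact integral_congr_ae (Filter.Eventually.of_forall fun x => by simp only [hFe])
    have step2 : (∫ q, exp (l * (F q - M)) ∂((μ 0).prod ν))
        = ∫ y, (∫ a, exp (l * (F (a, y) - M)) ∂(μ 0)) ∂ν :=
      integral_prod_symm _ hexpFint
    have hinner : ∀ y, (∫ a, exp (l * (F (a, y) - M)) ∂(μ 0))
        ≤ exp (l ^ 2 * (c 0) ^ 2 / 8) * exp (l * (g y - M)) := by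
      intro y
      have e1 : ∀ a, exp (l * (F (a, y) - M))
          = exp (l * (F (a, y) - g y)) * exp (l * (g y - M)) := by
        intro a
        rw [← Real.exp_add]
        congr 1
        ring
      rw [integral_congr_ae (Filter.Eventually.of_forall e1), integral_mul_const]
      have hhoef : (∫ a, exp (l * (F (a, y) - g y)) ∂(μ 0)) ≤ exp (l ^ 2 * (c 0) ^ 2 / 8) := by
        have hXmeas : Measurable (fun a => F (a, y)) :=
          hFmeas.comp (measurable_id.prodMk measurable_const)
        exact mcd_hoeffding (μ 0) hXmeas (fun a a' => hFosc0 y a a') l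
      exact mul_le_mul_of_nonneg_right hhoef (exp_pos _).le
    have hinner_meas : Measurable (fun y => ∫ a, exp (l * (F (a, y) - M)) ∂(μ 0)) :=
      (((hFmeas.sub measurable_const).const_mul l).exp).stronglyMeasurable.integral_prod_left'.measurable
    have hinner_int : Integrable (fun y => ∫ a, exp (l * (F (a, y) - M)) ∂(μ 0)) ν := by
      apply mcd_integrable_of_bounded' hinner_meas
      intro y
      rw [abs_le]
      constructor
      · calc -(exp (|l| * (2 * D))) ≤ 0 := neg_nonpos_of_nonneg (exp_pos _).le
        _ ≤ _ := integral_nonneg (fun a => (exp_pos _).le)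
      · calc (∫ a, exp (l * (F (a, y) - M)) ∂(μ 0))
            ≤ ∫ _a, exp (|l| * (2 * D)) ∂(μ 0) :=
              integral_mono (hexpF_left y) (integrable_const _) (fun a => by
                have := hexpFbd (a, y)
                rwa [abs_of_nonneg (exp_pos _).le] at this)
        _ = exp (|l| * (2 * D)) := by simp
    have hgB : ∀ y, |g y| ≤ D := by
      intro y
      rw [hg]
      calc |∫ a, F (a, y) ∂(μ 0)| ≤ ∫ a, |F (a, y)| ∂(μ 0) := mcd_abs_integral _
      _ ≤ ∫ _a, D ∂(μ 0) := integral_mono (hFint_left y).abs (integrable_const D)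
            (fun a => hfB _)
      _ = D := by simp
    have hexpg_int : Integrable (fun y => exp (l * (g y - M))) ν := by
      apply mcd_integrable_of_bounded' (((hgmeas.sub measurable_const).const_mul l).exp)
      intro y
      rw [abs_of_nonneg (exp_pos _).le]
      apply exp_le_exp.2
      calc l * (g y - M) ≤ |l| * |g y - M| := by rw [← abs_mul]; exact le_abs_self _
      _ ≤ |l| * (2 * D) := by
          apply mul_le_mul_of_nonneg_left _ (abs_nonneg l)
          calc |g y - M| ≤ |g y| + |M| := abs_sub _ _
          _ ≤ D + D := add_le_add (hgB _) hMD
          _ = 2 * D := by ring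
    have hRHS_int : Integrable
        (fun y => exp (l ^ 2 * (c 0) ^ 2 / 8) * exp (l * (g y - M))) ν :=
      hexpg_int.const_mul _
    have hIH : (∫ y, exp (l * (g y - M)) ∂ν)
        ≤ exp (l ^ 2 * (∑ j : Fin n, c ((0 : Fin (n+1)).succAbove j) ^ 2) / 8) := by
      have := ih (fun j => μ ((0 : Fin (n+1)).succAbove j)) g hgmeas
        (fun j => c ((0 : Fin (n+1)).succAbove j)) hg_bdd l
      rw [← hν] at this
      rwa [hEfg]
    calc (∫ x, exp (l * (f x - M)) ∂Pm)
        = ∫ y, (∫ a, exp (l * (F (a, y) - M)) ∂(μ 0)) ∂ν := by rw [step1, step2]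
    _ ≤ ∫ y, (exp (l ^ 2 * (c 0) ^ 2 / 8) * exp (l * (g y - M))) ∂ν :=
        integral_mono hinner_int hRHS_int hinner
    _ = exp (l ^ 2 * (c 0) ^ 2 / 8) * ∫ y, exp (l * (g y - M)) ∂ν := integral_const_mul _ _
    _ ≤ exp (l ^ 2 * (c 0) ^ 2 / 8)
          * exp (l ^ 2 * (∑ j : Fin n, c ((0 : Fin (n+1)).succAbove j) ^ 2) / 8) :=
        mul_le_mul_of_nonneg_left hIH (exp_pos _).le
    _ = exp (l ^ 2 * (∑ i, c i ^ 2) / 8) := by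
        rw [← Real.exp_add]
        congr 1
        rw [Fin.sum_univ_succAbove (fun i => c i ^ 2) 0]
        ring

lemma mcd_integrable_of_bounded'' {Ω : Type*} [MeasurableSpace Ω] {μ : Measure Ω}
    [IsFiniteMeasure μ] {g : Ω → ℝ} (hg : Measurable g) {C : ℝ}
    (hC : ∀ ω, |g ω| ≤ C) : Integrable g μ :=
  Integrable.mono' (integrable_const C) hg.aestronglyMeasurable
    (Filter.Eventually.of_forall hC)

lemma mcd_map_pi {Ω : Type*} [MeasurableSpace Ω] (P : Measure Ω) [IsProbabilityMeasure P]
    {n : ℕ} {𝒳 : Fin n → Type u} [∀ i, MeasurableSpace (𝒳 i)]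
    (W : ∀ i, Ω → 𝒳 i) (hWmeas : ∀ i, Measurable (W i))
    (hindep : iIndepFun W P) :
    P.map (fun ω i => W i ω) = Measure.pi (fun i => P.map (W i)) := by
  haveI : ∀ i, IsProbabilityMeasure (P.map (W i)) :=
    fun i => Measure.isProbabilityMeasure_map (hWmeas i).aemeasurable
  refine (Measure.pi_eq fun s hs => ?_).symm
  rw [Measure.map_apply (measurable_pi_lambda _ hWmeas) (MeasurableSet.univ_pi hs)]
  have hpre : (fun ω i => W i ω) ⁻¹' (Set.univ.pi s) = ⋂ i ∈ Finset.univ, W i ⁻¹' s i := by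
    ext ω; simp [Set.mem_pi]
  rw [hpre, hindep.measure_inter_preimage_eq_mul Finset.univ (fun i _ => hs i)]
  exact Finset.prod_congr rfl fun i _ =>
    (Measure.map_apply (hWmeas i) (hs i)).symm

/-- McDiarmid's inequality: let `W₁, …, Wₙ` be independent random variables and `f` a
measurable function of `(W₁, …, Wₙ)` satisfying the bounded differences condition with
constants `c i`. Then for every `t ≥ 0`,
`P(|f(W) − E f(W)| ≥ t) ≤ 2 exp(−2t²/Σ cᵢ²)`. -/
theorem stmt_7 {Ω : Type*} [MeasurableSpace Ω] (P : Measure Ω) [IsProbabilityMeasure P]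
    {n : ℕ} {𝒳 : Fin n → Type*} [∀ i, MeasurableSpace (𝒳 i)]
    (W : ∀ i, Ω → 𝒳 i) (hWmeas : ∀ i, Measurable (W i))
    (hindep : iIndepFun W P)
    (f : (∀ i, 𝒳 i) → ℝ) (hf : Measurable f)
    (c : Fin n → ℝ)
    (hbdd : ∀ (i : Fin n) (w : ∀ j, 𝒳 j) (w' : 𝒳 i),
      |f w - f (Function.update w i w')| ≤ c i)
    (t : ℝ) (ht : 0 ≤ t) :
    P {ω | t ≤ |f (fun i => W i ω) - ∫ ω', f (fun i => W i ω') ∂P|} ≤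
      ENNReal.ofReal (2 * Real.exp (-2 * t ^ 2 / ∑ i, (c i) ^ 2)) := by
  classical
  set μ : ∀ i, Measure (𝒳 i) := fun i => P.map (W i) with hμ
  haveI : ∀ i, IsProbabilityMeasure (μ i) :=
    fun i => Measure.isProbabilityMeasure_map (hWmeas i).aemeasurable
  set T : Ω → ∀ i, 𝒳 i := fun ω i => W i ω with hT
  have hTmeas : Measurable T := measurable_pi_lambda _ hWmeas
  have hmap : P.map T = Measure.pi μ := mcd_map_pi P W hWmeas hindep
  -- boundedness of f
  obtain ⟨ω₀⟩ : Nonempty Ω := mcd_nonempty P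
  have hosc := mcd_osc f c hbdd
  set B : ℝ := ∑ i, c i with hB
  set D : ℝ := |f (T ω₀)| + B with hD
  have hfB : ∀ x, |f x| ≤ D := by
    intro x
    have h1 := hosc x (T ω₀)
    have h2 := hosc (T ω₀) x
    rw [abs_le]; constructor
    · rw [hD]; linarith [neg_abs_le (f (T ω₀))]
    · rw [hD]; linarith [le_abs_self (f (T ω₀))]
  -- transfer of integrals
  have htrans : ∀ g : (∀ i, 𝒳 i) → ℝ, Measurable g →
      (∫ ω', g (T ω') ∂P) = ∫ x, g x ∂(Measure.pi μ) := by
    intro g hg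
    rw [← hmap, integral_map hTmeas.aemeasurable hg.aestronglyMeasurable]
  set M : ℝ := ∫ x', f x' ∂(Measure.pi μ) with hM
  have hMP : (∫ ω', f (fun i => W i ω') ∂P) = M := htrans f hf
  set S : ℝ := ∑ i, c i ^ 2 with hS
  have hS0 : 0 ≤ S := Finset.sum_nonneg fun i _ => sq_nonneg _
  have hc_nonneg : ∀ i, 0 ≤ c i := by
    intro i
    have := hbdd i (T ω₀) (T ω₀ i)
    rwa [Function.update_eq_self, sub_self, abs_zero] at this
  rcases eq_or_lt_of_le ht with ht0 | htpos
  · -- t = 0 : bound by 1 ≤ 2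
    have h2 : (1 : ℝ≥0∞) ≤ ENNReal.ofReal (2 * Real.exp (-2 * t ^ 2 / S)) := by
      rw [← ht0]
      simp only [ne_eq, OfNat.ofNat_ne_zero, not_false_iff, zero_pow, mul_zero, zero_div,
        Real.exp_zero, mul_one]
      rw [show ((1:ℝ≥0∞)) = ENNReal.ofReal 1 by simp]
      exact ENNReal.ofReal_le_ofReal (by norm_num)
    exact le_trans prob_le_one h2
  rcases eq_or_lt_of_le hS0 with hSz | hSpos
  · -- S = 0 : f is constant, event is empty
    have hci : ∀ i, c i = 0 := by
      intro i
      have hmem : ∀ j ∈ Finset.univ, (0:ℝ) ≤ c j ^ 2 := fun j _ => sq_nonneg _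
      have h0 := (Finset.sum_eq_zero_iff_of_nonneg hmem).1 hSz.symm i (Finset.mem_univ i)
      exact pow_eq_zero_iff (two_ne_zero) |>.mp h0
    have hBz : B = 0 := by rw [hB]; exact Finset.sum_eq_zero fun i _ => hci i
    have hconst : ∀ x y, f x = f y := by
      intro x y
      have h1 := hosc x y
      have h2 := hosc y x
      rw [hBz] at h1 h2
      linarith
    have hev : {ω | t ≤ |f (fun i => W i ω) - ∫ ω', f (fun i => W i ω') ∂P|} = ∅ := by
      ext ω
      simp only [Set.mem_setOf_eq, Set.mem_empty_iff_false, iff_false, not_le]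
      have hint : (∫ ω', f (fun i => W i ω') ∂P) = f (fun i => W i ω) := by
        calc (∫ ω', f (fun i => W i ω') ∂P) = ∫ _ω', f (fun i => W i ω) ∂P :=
              integral_congr_ae (Filter.Eventually.of_forall fun ω' => hconst _ _)
        _ = f (fun i => W i ω) := by simp
      rw [hint, sub_self, abs_zero]
      exact htpos
    rw [hev]
    simp
  · -- main case
    set l : ℝ := 4 * t / S with hl
    have hlpos : 0 < l := by positivity
    -- mgf bounds via the product measure
    have hXbd : ∀ x : ∀ i, 𝒳 i, |f x - M| ≤ 2 * D := by
      intro x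
      have hMD : |M| ≤ D := by
        rw [hM]
        calc |∫ x', f x' ∂(Measure.pi μ)| ≤ ∫ x', |f x'| ∂(Measure.pi μ) := by
              simpa [Real.norm_eq_abs] using
                norm_integral_le_integral_norm (μ := Measure.pi μ) f
        _ ≤ ∫ _x', D ∂(Measure.pi μ) := integral_mono
              (mcd_integrable_of_bounded'' hf hfB).abs (integrable_const D) hfB
        _ = D := by simp
      calc |f x - M| ≤ |f x| + |M| := abs_sub _ _
      _ ≤ D + D := add_le_add (hfB x) hMD
      _ = 2 * D := by ring
    have hup : ∀ (f' : (∀ i, 𝒳 i) → ℝ), Measurable f' →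
        (∀ (i : Fin n) (w : ∀ j, 𝒳 j) (w' : 𝒳 i),
          |f' w - f' (Function.update w i w')| ≤ c i) →
        (∀ x, |f' x - ∫ x', f' x' ∂(Measure.pi μ)| ≤ 2 * D) →
        P {ω | t ≤ f' (T ω) - ∫ x', f' x' ∂(Measure.pi μ)} ≤
          ENNReal.ofReal (Real.exp (-2 * t ^ 2 / S)) := by
      intro f' hf' hbdd' hbd2
      set M' : ℝ := ∫ x', f' x' ∂(Measure.pi μ) with hM'
      set X : Ω → ℝ := fun ω => f' (T ω) - M' with hX
      have hXmeas : Measurable X := (hf'.comp hTmeas).sub measurable_const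
      have hint : Integrable (fun ω => exp (l * X ω)) P := by
        apply mcd_integrable_of_bounded'' (((hXmeas).const_mul l).exp)
        intro ω
        rw [abs_of_nonneg (exp_pos _).le]
        apply exp_le_exp.2
        calc l * X ω ≤ |l| * |X ω| := by rw [← abs_mul]; exact le_abs_self _
        _ ≤ |l| * (2 * D) := mul_le_mul_of_nonneg_left (hbd2 (T ω)) (abs_nonneg l)
      have hmgf : mgf X P l ≤ exp (l ^ 2 * S / 8) := by
        have h1 : mgf X P l = ∫ ω, exp (l * X ω) ∂P := rfl
        have h2 : (∫ ω, exp (l * X ω) ∂P)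
            = ∫ x, exp (l * (f' x - M')) ∂(Measure.pi μ) := by
          have := htrans (fun x => exp (l * (f' x - M')))
            (((hf'.sub measurable_const).const_mul l).exp)
          rw [← this]
        rw [h1, h2, hS]
        exact mcd_mgf_pi n μ f' hf' c hbdd' l
      have hcher := measure_ge_le_exp_mul_mgf (X := X) (μ := P) (t := l) t hlpos.le hint
      have hPle : (P {ω | t ≤ X ω}).toReal ≤ exp (-2 * t ^ 2 / S) := by
        calc (P {ω | t ≤ X ω}).toReal ≤ exp (-l * t) * mgf X P l := hcher
        _ ≤ exp (-l * t) * exp (l ^ 2 * S / 8) :=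
            mul_le_mul_of_nonneg_left hmgf (exp_pos _).le
        _ = exp (-l * t + l ^ 2 * S / 8) := by rw [← Real.exp_add]
        _ = exp (-2 * t ^ 2 / S) := by
            congr 1
            rw [hl]
            field_simp
            ring
      calc P {ω | t ≤ f' (T ω) - M'} = ENNReal.ofReal ((P {ω | t ≤ X ω}).toReal) := by
            rw [ENNReal.ofReal_toReal (measure_ne_top _ _)]
      _ ≤ ENNReal.ofReal (exp (-2 * t ^ 2 / S)) := ENNReal.ofReal_le_ofReal hPle
    -- apply to f and -f
    have hAup := hup f hf hbdd (fun x => hXbd x)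
    have hnegbdd : ∀ (i : Fin n) (w : ∀ j, 𝒳 j) (w' : 𝒳 i),
        |(-f) w - (-f) (Function.update w i w')| ≤ c i := by
      intro i w w'
      simp only [Pi.neg_apply]
      rw [show -f w - -f (Function.update w i w') = -(f w - f (Function.update w i w')) by ring,
        abs_neg]
      exact hbdd i w w'
    have hnegM : (∫ x', (-f) x' ∂(Measure.pi μ)) = -M := by
      rw [hM]
      simp only [Pi.neg_apply]
      exact integral_neg f
    have hBdown := hup (-f) hf.neg hnegbdd (by
      intro x
      rw [hnegM]
      simp only [Pi.neg_apply]
      rw [show -f x - -M = -(f x - M) by ring, abs_neg]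
      exact hXbd x)
    -- union bound
    have hsub : {ω | t ≤ |f (fun i => W i ω) - ∫ ω', f (fun i => W i ω') ∂P|}
        ⊆ {ω | t ≤ f (T ω) - M} ∪ {ω | t ≤ (-f) (T ω) - ∫ x', (-f) x' ∂(Measure.pi μ)} := by
      intro ω hω
      simp only [Set.mem_setOf_eq] at hω
      rw [hMP] at hω
      rcases le_abs.mp hω with h | h
      · left; exact h
      · right
        show t ≤ (-f) (T ω) - ∫ x', (-f) x' ∂(Measure.pi μ)
        rw [hnegM]
        simp only [Pi.neg_apply]
        linarith
    calc P {ω | t ≤ |f (fun i => W i ω) - ∫ ω', f (fun i => W i ω') ∂P|}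
        ≤ P ({ω | t ≤ f (T ω) - M}
            ∪ {ω | t ≤ (-f) (T ω) - ∫ x', (-f) x' ∂(Measure.pi μ)}) := measure_mono hsub
    _ ≤ P {ω | t ≤ f (T ω) - M}
          + P {ω | t ≤ (-f) (T ω) - ∫ x', (-f) x' ∂(Measure.pi μ)} := measure_union_le _ _
    _ ≤ ENNReal.ofReal (Real.exp (-2 * t ^ 2 / S))
          + ENNReal.ofReal (Real.exp (-2 * t ^ 2 / S)) := add_le_add hAup hBdown
    _ = ENNReal.ofReal (2 * Real.exp (-2 * t ^ 2 / S)) := by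
          rw [← ENNReal.ofReal_add (exp_pos _).le (exp_pos _).le]
          congr 1
          ring
end

section
/- Under the Lipschitz condition ‖F'[ξ₁] − F'[ξ₂]‖ ≤ L‖ξ₁ − ξ₂‖ and the spectral bound ‖[r_α(A*A) − r_α(B*B)](B*B)^μ‖ ≤ C_μ‖A − B‖ for μ ≥ 1/2, the nonlinearity error e^{nl}_{j+1} := g_{α_j}(T_j^*T_j)T_j^*[F(φ†) − F(φ_j) + T_j(φ_j − φ†)] + [r_{α_j}(T_j^*T_j) − r_{α_j}(T_†^*T_†)](T_†^*T_†)^μ ω satisfies ‖e^{nl}_{j+1}‖ ≤ (L√C_g / (2√α_j))‖e_j‖² + C_μ ρ L ‖e_j‖, where e_j = φ_j − φ†, T_j = F'[φ_j], T_† = F'[φ†], ρ ≥ ‖ω‖. -/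
open ContinuousLinearMap

/-- Quadratic Taylor remainder bound for a map with Lipschitz derivative. -/
lemma taylor_remainder_lip {X Y : Type*} [NormedAddCommGroup X] [NormedSpace ℂ X]
    [NormedAddCommGroup Y] [NormedSpace ℂ Y]
    (F : X → Y) (F' : X → (X →L[ℂ] Y)) (L : ℝ) (hL : 0 ≤ L)
    (hdiff : ∀ x : X, HasFDerivAt F (F' x) x)
    (hlip : ∀ ξ₁ ξ₂ : X, ‖F' ξ₁ - F' ξ₂‖ ≤ L * ‖ξ₁ - ξ₂‖) (a b : X) :
    ‖F b - F a - F' a (b - a)‖ ≤ L / 2 * ‖b - a‖ ^ 2 := by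
  set d := b - a with hd
  set f : ℝ → Y := fun t => F (a + t • d) - t • (F' a d) - F a with hf
  have hderiv : ∀ t : ℝ, HasDerivAt f (F' (a + t • d) d - F' a d) t := by
    intro t
    have h1 : HasDerivAt (fun t : ℝ => a + t • d) d t := by
      simpa using ((hasDerivAt_id t).smul_const d).const_add a
    have h2 : HasDerivAt (fun t : ℝ => F (a + t • d)) (F' (a + t • d) d) t :=
      by have := ((hdiff (a + t • d)).restrictScalars ℝ).comp_hasDerivAt t h1; exact this
    have h3 : HasDerivAt (fun t : ℝ => t • (F' a d)) (F' a d) t := by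
      simpa using (hasDerivAt_id t).smul_const (F' a d)
    exact (h2.sub h3).sub_const (F a)
  have key : ∀ x ∈ Set.Icc (0:ℝ) 1, ‖f x‖ ≤ L * ‖d‖ ^ 2 * x ^ 2 / 2 := by
    refine fun x hx => image_norm_le_of_norm_deriv_right_le_deriv_boundary
      (f' := fun t => F' (a + t • d) d - F' a d)
      (B := fun t => L * ‖d‖ ^ 2 * t ^ 2 / 2)
      (B' := fun t => L * ‖d‖ ^ 2 * t) ?_ ?_ ?_ ?_ ?_ hx
    · exact fun t _ => (hderiv t).continuousAt.continuousWithinAt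
    · exact fun t _ => (hderiv t).hasDerivWithinAt
    · simp [hf]
    · intro x
      have : HasDerivAt (fun t : ℝ => L * ‖d‖ ^ 2 * t ^ 2 / 2)
          (L * ‖d‖ ^ 2 * (2 * x) / 2) x := by
        exact (((hasDerivAt_pow 2 x).const_mul (L * ‖d‖ ^ 2)).div_const 2).congr_deriv (by ring)
      simpa using this.congr_deriv (by ring)
    · intro x hx
      have h1 : ‖F' (a + x • d) d - F' a d‖ ≤ ‖F' (a + x • d) - F' a‖ * ‖d‖ := by
        simpa using (F' (a + x • d) - F' a).le_opNorm d
      have h2 : ‖F' (a + x • d) - F' a‖ ≤ L * (x * ‖d‖) := by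
        have := hlip (a + x • d) a
        simpa [norm_smul, abs_of_nonneg hx.1] using this
      calc ‖F' (a + x • d) d - F' a d‖ ≤ L * (x * ‖d‖) * ‖d‖ :=
            h1.trans (by
              exact mul_le_mul_of_nonneg_right h2 (norm_nonneg d))
        _ = L * ‖d‖ ^ 2 * x := by ring
  have := key 1 (by norm_num)
  have heq : f 1 = F b - F a - F' a (b - a) := by
    have hab : a + (b - a) = b := by abel
    simp only [hf, hd, one_smul, hab]
    abel
  rw [heq] at this
  calc ‖F b - F a - F' a (b - a)‖ ≤ L * ‖d‖ ^ 2 * 1 ^ 2 / 2 := this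
    _ = L / 2 * ‖b - a‖ ^ 2 := by rw [hd]; ring

/-- Bound for the nonlinearity error of the IRGNM: under the Lipschitz condition
`‖F'[ξ₁] − F'[ξ₂]‖ ≤ L‖ξ₁ − ξ₂‖`, the bound `‖g_α(T_j*T_j)T_j*ψ‖ ≤ √(C_g/α_j)‖ψ‖`, and
the spectral bound `‖[r_α(T_j*T_j) − r_α(T_†*T_†)](T_†*T_†)^μ v‖ ≤ C_μ‖T_j − T_†‖‖v‖`
for `μ ≥ 1/2`, the nonlinearity error
`e^{nl} = g_α(T_j*T_j)T_j*[F(φ†) − F(φ_j) + T_j(φ_j − φ†)]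
        + [r_α(T_j*T_j) − r_α(T_†*T_†)](T_†*T_†)^μ ω`
satisfies `‖e^{nl}‖ ≤ (L√C_g/(2√α_j))‖e_j‖² + C_μ ρ L ‖e_j‖` where `e_j = φ_j − φ†` and
`ρ ≥ ‖ω‖`. -/
theorem stmt_12 {X Y : Type*} [NormedAddCommGroup X] [InnerProductSpace ℂ X] [CompleteSpace X]
    [NormedAddCommGroup Y] [InnerProductSpace ℂ Y] [CompleteSpace Y]
    (F : X → Y) (F' : X → (X →L[ℂ] Y)) (L Cg Cμ αj μ ρ : ℝ)
    (hL : 0 < L) (hCg : 0 < Cg) (hCμ : 0 < Cμ) (hαj : 0 < αj) (hμ : 1 / 2 ≤ μ)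
    (hdiff : ∀ x : X, HasFDerivAt F (F' x) x)
    (hlip : ∀ ξ₁ ξ₂ : X, ‖F' ξ₁ - F' ξ₂‖ ≤ L * ‖ξ₁ - ξ₂‖)
    (g r : ℝ → ℝ) (φdag φj : X) (ω : X) (hρ : ‖ω‖ ≤ ρ)
    (Tj Tdag : X →L[ℂ] Y) (hTj : Tj = F' φj) (hTdag : Tdag = F' φdag)
    (hg : ∀ ψ : Y,
      ‖(cfc g (ContinuousLinearMap.adjoint Tj ∘L Tj)) (ContinuousLinearMap.adjoint Tj ψ)‖ ≤
        Real.sqrt (Cg / αj) * ‖ψ‖)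
    (hr : ∀ v : X,
      ‖(cfc r (ContinuousLinearMap.adjoint Tj ∘L Tj) -
          cfc r (ContinuousLinearMap.adjoint Tdag ∘L Tdag))
          ((cfc (fun x : ℝ => x ^ μ) (ContinuousLinearMap.adjoint Tdag ∘L Tdag)) v)‖ ≤
        Cμ * ‖Tj - Tdag‖ * ‖v‖) :
    ‖(cfc g (ContinuousLinearMap.adjoint Tj ∘L Tj))
        (ContinuousLinearMap.adjoint Tj (F φdag - F φj + Tj (φj - φdag))) +
      (cfc r (ContinuousLinearMap.adjoint Tj ∘L Tj) -
          cfc r (ContinuousLinearMap.adjoint Tdag ∘L Tdag))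
        ((cfc (fun x : ℝ => x ^ μ) (ContinuousLinearMap.adjoint Tdag ∘L Tdag)) ω)‖ ≤
      (L * Real.sqrt Cg / (2 * Real.sqrt αj)) * ‖φj - φdag‖ ^ 2 + Cμ * ρ * L * ‖φj - φdag‖ := by
  have htri := norm_add_le
    ((cfc g (ContinuousLinearMap.adjoint Tj ∘L Tj))
        (ContinuousLinearMap.adjoint Tj (F φdag - F φj + Tj (φj - φdag))))
    ((cfc r (ContinuousLinearMap.adjoint Tj ∘L Tj) -
          cfc r (ContinuousLinearMap.adjoint Tdag ∘L Tdag))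
        ((cfc (fun x : ℝ => x ^ μ) (ContinuousLinearMap.adjoint Tdag ∘L Tdag)) ω))
  refine htri.trans (add_le_add ?_ ?_)
  · -- first term
    have hψ : ‖F φdag - F φj + Tj (φj - φdag)‖ ≤ L / 2 * ‖φj - φdag‖ ^ 2 := by
      have := taylor_remainder_lip F F' L hL.le hdiff hlip φj φdag
      have heq : F φdag - F φj + Tj (φj - φdag) =
          F φdag - F φj - F' φj (φdag - φj) := by
        rw [hTj, map_sub, map_sub]
        abel
      rw [heq, norm_sub_rev φj φdag] at *
      exact this
    calc ‖(cfc g (ContinuousLinearMap.adjoint Tj ∘L Tj))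
            (ContinuousLinearMap.adjoint Tj (F φdag - F φj + Tj (φj - φdag)))‖
        ≤ Real.sqrt (Cg / αj) * ‖F φdag - F φj + Tj (φj - φdag)‖ := hg _
      _ ≤ Real.sqrt (Cg / αj) * (L / 2 * ‖φj - φdag‖ ^ 2) :=
          mul_le_mul_of_nonneg_left hψ (Real.sqrt_nonneg _)
      _ = (L * Real.sqrt Cg / (2 * Real.sqrt αj)) * ‖φj - φdag‖ ^ 2 := by
          rw [Real.sqrt_div hCg.le]
          ring
  · -- second term
    have hT : ‖Tj - Tdag‖ ≤ L * ‖φj - φdag‖ := by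
      rw [hTj, hTdag]; exact hlip φj φdag
    calc ‖(cfc r (ContinuousLinearMap.adjoint Tj ∘L Tj) -
            cfc r (ContinuousLinearMap.adjoint Tdag ∘L Tdag))
            ((cfc (fun x : ℝ => x ^ μ) (ContinuousLinearMap.adjoint Tdag ∘L Tdag)) ω)‖
        ≤ Cμ * ‖Tj - Tdag‖ * ‖ω‖ := hr ω
      _ ≤ Cμ * (L * ‖φj - φdag‖) * ρ := by
          apply mul_le_mul
          · exact mul_le_mul_of_nonneg_left hT hCμ.le
          · exact hρ
          · exact norm_nonneg _
          · positivity
      _ = Cμ * ρ * L * ‖φj - φdag‖ := by ring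
end

section
/- Let a_j be nonincreasing with a_j ≤ γ a_{j+1}, and Φ(j) increasing with Φ(j+1)/Φ(j) ≤ q^{−1/2} (for q ∈ (0,1)). Let {φ_j}_{j≤J_max} be elements of a Hilbert space satisfying ‖φ_j − φ†‖ ≤ (1+γ')(a_j + Φ(j)) for all j ≤ J_max, where γ' ≤ 1. Define the Lepskiĭ index J_Lep := min{ j ≤ J_max : ‖φ_i − φ_j‖ ≤ 4(1+γ')Φ(i) for all i with j ≤ i ≤ J_max }. Then ‖φ_{J_Lep} − φ†‖ ≤ 6 q^{−1/2} (1+γ') min_{j ≤ J_max} (a_j + Φ(j)). -/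
/-- Lepskiĭ balancing principle: in a Hilbert space `H`, let `φ_j` (for `j ≤ J_max`)
satisfy `‖φ_j − φ†‖ ≤ (1+γ')(a_j + Φ(j))` with `a_j` nonincreasing, `a_j ≤ γ a_{j+1}`,
`Φ` increasing with `Φ(j+1)/Φ(j) ≤ q^{−1/2}` for `q ∈ (0,1)`, and `γ' ≤ 1`. If `J_Lep`
is the least `j ≤ J_max` such that `‖φ_i − φ_j‖ ≤ 4(1+γ')Φ(i)` for all `j ≤ i ≤ J_max`,
then `‖φ_{J_Lep} − φ†‖ ≤ 6 q^{−1/2} (1+γ') min_{j ≤ J_max}(a_j + Φ(j))`. -/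
theorem stmt_16 {H : Type*} [NormedAddCommGroup H] [InnerProductSpace ℝ H] [CompleteSpace H]
    (q γ γ' : ℝ) (hq0 : 0 < q) (hq1 : q < 1) (hγ'0 : 0 ≤ γ') (hγ'1 : γ' ≤ 1)
    (a Φ : ℕ → ℝ) (ha_nonneg : ∀ j, 0 ≤ a j) (hΦ_pos : ∀ j, 0 < Φ j)
    (ha : ∀ j, a (j + 1) ≤ a j ∧ a j ≤ γ * a (j + 1))
    (hΦ : ∀ j, Φ j ≤ Φ (j + 1) ∧ Φ (j + 1) / Φ j ≤ q ^ (-(1 : ℝ) / 2))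
    (φ : ℕ → H) (φdag : H) (Jmax : ℕ)
    (herr : ∀ j ≤ Jmax, ‖φ j - φdag‖ ≤ (1 + γ') * (a j + Φ j))
    (JLep : ℕ)
    (hJLep : IsLeast {j : ℕ | j ≤ Jmax ∧
      ∀ i : ℕ, j ≤ i → i ≤ Jmax → ‖φ i - φ j‖ ≤ 4 * (1 + γ') * Φ i} JLep) :
    ∀ j ≤ Jmax, ‖φ JLep - φdag‖ ≤ 6 * q ^ (-(1 : ℝ) / 2) * (1 + γ') * (a j + Φ j) := by
  intro j hj
  set s : ℝ := q ^ (-(1 : ℝ) / 2) with hs_def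
  have hs1 : 1 ≤ s := by
    have : (1 : ℝ) < q ^ (-(1 : ℝ) / 2) := by
      rw [Real.one_lt_rpow_iff_of_pos hq0]
      right
      constructor
      · exact hq1
      · norm_num
    exact le_of_lt this
  have hγpos : (0 : ℝ) < 1 + γ' := by linarith
  have ha_anti : ∀ i k : ℕ, i ≤ k → a k ≤ a i := fun i k h =>
    (antitone_nat_of_succ_le (fun n => (ha n).1)) h
  have hΦ_mono : ∀ i k : ℕ, i ≤ k → Φ i ≤ Φ k := fun i k h =>
    (monotone_nat_of_le_succ (fun n => (hΦ n).1)) h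
  have hΦ_step : ∀ n : ℕ, Φ (n + 1) ≤ s * Φ n := by
    intro n
    have := (hΦ n).2
    rw [div_le_iff₀ (hΦ_pos n)] at this
    linarith [this]
  -- key: for any j₀ ≤ Jmax that is in the Lepskiĭ set, and has a j₀ ≤ Φ j₀ (or total bound),
  -- we get the estimate.  First: for any j₀ in the set, with JLep ≤ j₀,
  have key : ∀ j₀ : ℕ, j₀ ≤ Jmax →
      (∀ i : ℕ, j₀ ≤ i → i ≤ Jmax → ‖φ i - φ j₀‖ ≤ 4 * (1 + γ') * Φ i) →
      ‖φ JLep - φdag‖ ≤ 4 * (1 + γ') * Φ j₀ + (1 + γ') * (a j₀ + Φ j₀) := by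
    intro j₀ hj₀ hset
    have hle : JLep ≤ j₀ := hJLep.2 ⟨hj₀, hset⟩
    have h1 : ‖φ j₀ - φ JLep‖ ≤ 4 * (1 + γ') * Φ j₀ := hJLep.1.2 j₀ hle hj₀
    have h2 : ‖φ j₀ - φdag‖ ≤ (1 + γ') * (a j₀ + Φ j₀) := herr j₀ hj₀
    have hv : φ JLep - φdag = -(φ j₀ - φ JLep) + (φ j₀ - φdag) := by abel
    calc ‖φ JLep - φdag‖ = ‖-(φ j₀ - φ JLep) + (φ j₀ - φdag)‖ := by rw [hv]
      _ ≤ ‖-(φ j₀ - φ JLep)‖ + ‖φ j₀ - φdag‖ := norm_add_le _ _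
      _ = ‖φ j₀ - φ JLep‖ + ‖φ j₀ - φdag‖ := by rw [norm_neg]
      _ ≤ 4 * (1 + γ') * Φ j₀ + (1 + γ') * (a j₀ + Φ j₀) := add_le_add h1 h2
  by_cases hex : ∃ k, k ≤ Jmax ∧ a k ≤ Φ k
  · -- let j₀ be the least such index
    set j₀ := Nat.find hex with hj₀_def
    obtain ⟨hj₀max, hj₀bal⟩ := Nat.find_spec hex
    have hbefore : ∀ k, k < j₀ → Φ k < a k := by
      intro k hk
      have := Nat.find_min hex hk
      push_neg at this
      exact this (le_trans (le_of_lt (lt_of_lt_of_le hk hj₀max)) le_rfl)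
    have hset : ∀ i : ℕ, j₀ ≤ i → i ≤ Jmax → ‖φ i - φ j₀‖ ≤ 4 * (1 + γ') * Φ i := by
      intro i hi1 hi2
      have hai : a i ≤ Φ i := le_trans (le_trans (ha_anti j₀ i hi1) hj₀bal) (hΦ_mono j₀ i hi1)
      have haj₀ : a j₀ ≤ Φ i := le_trans hj₀bal (hΦ_mono j₀ i hi1)
      have hΦj₀ : Φ j₀ ≤ Φ i := hΦ_mono j₀ i hi1
      have hv : φ i - φ j₀ = (φ i - φdag) + -(φ j₀ - φdag) := by abel
      calc ‖φ i - φ j₀‖ = ‖(φ i - φdag) + -(φ j₀ - φdag)‖ := by rw [hv]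
        _ ≤ ‖φ i - φdag‖ + ‖φ j₀ - φdag‖ := by
            refine le_trans (norm_add_le _ _) ?_
            rw [norm_neg]
        _ ≤ (1 + γ') * (a i + Φ i) + (1 + γ') * (a j₀ + Φ j₀) :=
            add_le_add (herr i hi2) (herr j₀ hj₀max)
        _ ≤ 4 * (1 + γ') * Φ i := by nlinarith
    have hmain : ‖φ JLep - φdag‖ ≤ 6 * (1 + γ') * Φ j₀ := by
      have := key j₀ hj₀max hset
      nlinarith
    have hΦj₀_bound : Φ j₀ ≤ s * (a j + Φ j) := by
      rcases le_or_gt j₀ j with h | h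
      · have h1 : Φ j₀ ≤ Φ j := hΦ_mono j₀ j h
        have h2 : Φ j ≤ a j + Φ j := by linarith [ha_nonneg j]
        have h3 : a j + Φ j ≤ s * (a j + Φ j) := by
          nlinarith [ha_nonneg j, hΦ_pos j]
        linarith
      · -- j < j₀, so j₀ ≥ 1
        have hme : j₀ = (j₀ - 1) + 1 := by omega
        have hm : Φ (j₀ - 1) < a (j₀ - 1) := hbefore (j₀ - 1) (by omega)
        have ham : a (j₀ - 1) ≤ a j := ha_anti j (j₀ - 1) (by omega)
        have hstep : Φ j₀ ≤ s * Φ (j₀ - 1) := by rw [hme]; exact hΦ_step (j₀ - 1)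
        have hΦm : 0 < Φ (j₀ - 1) := hΦ_pos (j₀ - 1)
        have h3 : Φ j₀ ≤ s * a j := by nlinarith
        have h4 : s * a j ≤ s * (a j + Φ j) := by nlinarith [hΦ_pos j]
        linarith
    have h60 : (0 : ℝ) ≤ 6 * (1 + γ') := by linarith
    calc ‖φ JLep - φdag‖ ≤ 6 * (1 + γ') * Φ j₀ := hmain
      _ ≤ 6 * (1 + γ') * (s * (a j + Φ j)) := by
          exact mul_le_mul_of_nonneg_left hΦj₀_bound h60
      _ = 6 * s * (1 + γ') * (a j + Φ j) := by ring
  · -- no balance index: a k > Φ k for all k ≤ Jmax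
    push_neg at hex
    have hset : ∀ i : ℕ, Jmax ≤ i → i ≤ Jmax → ‖φ i - φ Jmax‖ ≤ 4 * (1 + γ') * Φ i := by
      intro i hi1 hi2
      have : i = Jmax := le_antisymm hi2 hi1
      subst this
      simp only [sub_self, norm_zero]
      nlinarith [hΦ_pos i]
    have hmain := key Jmax le_rfl hset
    have hΦmax : Φ Jmax < a Jmax := hex Jmax le_rfl
    have haj : a Jmax ≤ a j := ha_anti j Jmax hj
    have h1 : ‖φ JLep - φdag‖ ≤ 6 * (1 + γ') * a j := by nlinarith
    have h2 : 6 * (1 + γ') * a j ≤ 6 * s * (1 + γ') * (a j + Φ j) := by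
      nlinarith [mul_nonneg (mul_nonneg (by linarith : (0:ℝ) ≤ s - 1) hγpos.le) (ha_nonneg j),
        mul_nonneg (mul_nonneg (by linarith : (0:ℝ) ≤ s) hγpos.le) (hΦ_pos j).le]
    linarith
end
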